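/- arXiv:2512.14940 — 4 statements merged into one kernel-verified Lean document; each statement's English description precedes it below -/
import Mathlib

section
/- Let n be a positive integer and φ a real number. Let N = {t ∈ (0, 2π) : cos(nt − φ) < 0}. Then ∫_N cos(nt − φ) dt = −2. -/
open Real MeasureTheory

lemma min_zero_eq (a : ℝ) : min a 0 = (a - |a|) / 2 := by
  rcases le_or_gt a 0 with h | h
  · rw [min_eq_left h, abs_of_nonpos h]; ring
  · rw [min_eq_right h.le, abs_of_nonneg h.le]; ring

lemma abs_cos_period : Function.Periodic (fun x : ℝ => |Real.cos x|) (2 * π) := by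
  intro x; simp [Real.cos_add_two_pi]

lemma abs_cos_intInt : ∀ t₁ t₂ : ℝ,
    IntervalIntegrable (fun x : ℝ => |Real.cos x|) volume t₁ t₂ := fun t₁ t₂ =>
  (Real.continuous_cos.abs).intervalIntegrable t₁ t₂

lemma int_abs_cos_one_period : ∫ x in (-(π/2))..(-(π/2) + 2 * π), |Real.cos x| = 4 := by
  have h1 : ∫ x in (-(π/2))..(π/2), |Real.cos x| = 2 := by
    rw [intervalIntegral.integral_congr (g := Real.cos)]
    · rw [integral_cos]; norm_num
    · intro x hx
      rw [Set.uIcc_of_le (by linarith [Real.pi_pos])] at hx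
      show |Real.cos x| = Real.cos x
      exact abs_of_nonneg (Real.cos_nonneg_of_mem_Icc hx)
  have h2 : ∫ x in (π/2)..(π/2 + π), |Real.cos x| = 2 := by
    rw [intervalIntegral.integral_congr (g := fun x => -Real.cos x)]
    · rw [intervalIntegral.integral_neg, integral_cos]
      have : Real.sin (π/2 + π) = -1 := by
        rw [add_comm]; simp [Real.sin_add]
      rw [this]; simp; ring
    · intro x hx
      rw [Set.uIcc_of_le (by linarith [Real.pi_pos])] at hx
      show |Real.cos x| = -Real.cos x
      rw [abs_of_nonpos (Real.cos_nonpos_of_pi_div_two_le_of_le hx.1 (by linarith [hx.2]))]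
  have hsplit := intervalIntegral.integral_add_adjacent_intervals
    (abs_cos_intInt (-(π/2)) (π/2)) (abs_cos_intInt (π/2) (π/2 + π))
  have : -(π/2) + 2 * π = π/2 + π := by ring
  rw [this, ← hsplit, h1, h2]; norm_num

theorem stmt_1 (n : ℕ) (hn : 1 ≤ n) (φ : ℝ) :
    ∫ t in {t : ℝ | t ∈ Set.Ioo 0 (2 * π) ∧ Real.cos (n * t - φ) < 0},
      Real.cos (n * t - φ) = -2 := by
  have hn0 : (n : ℝ) ≠ 0 := Nat.cast_ne_zero.mpr (by omega)
  have hpi := Real.pi_pos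
  have hcont : Continuous fun t : ℝ => Real.cos (n * t - φ) := by fun_prop
  -- rewrite set integral as integral of min over Ioo
  have hmeas : MeasurableSet {t : ℝ | t ∈ Set.Ioo 0 (2 * π) ∧ Real.cos (n * t - φ) < 0} := by
    apply MeasurableSet.inter measurableSet_Ioo
    exact measurableSet_lt hcont.measurable measurable_const
  have key : ∫ t in {t : ℝ | t ∈ Set.Ioo 0 (2 * π) ∧ Real.cos (n * t - φ) < 0},
      Real.cos (n * t - φ)
      = ∫ t in Set.Ioo 0 (2 * π), min (Real.cos (n * t - φ)) 0 := by
    rw [← MeasureTheory.integral_indicator hmeas,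
        ← MeasureTheory.integral_indicator measurableSet_Ioo]
    congr 1
    ext t
    by_cases ht : t ∈ Set.Ioo 0 (2 * π)
    · by_cases hc : Real.cos (n * t - φ) < 0
      · rw [Set.indicator_of_mem (Set.mem_setOf.mpr ⟨ht, hc⟩), Set.indicator_of_mem ht, min_eq_left hc.le]
      · rw [Set.indicator_of_notMem (by simp [ht, hc]), Set.indicator_of_mem ht,
          min_eq_right (le_of_not_gt hc)]
    · rw [Set.indicator_of_notMem (fun h => ht h.1), Set.indicator_of_notMem ht]
  rw [key, ← MeasureTheory.integral_Ioc_eq_integral_Ioo,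
    ← intervalIntegral.integral_of_le (by linarith)]
  have hA : ∫ t in (0:ℝ)..(2*π), Real.cos (n * t - φ) = 0 := by
    rw [intervalIntegral.integral_comp_mul_sub Real.cos hn0 φ, integral_cos]
    have : (n : ℝ) * (2 * π) - φ = n * (2 * π) - φ := by ring
    rw [this, Real.sin_nat_mul_two_pi_sub]
    simp
  have hB : ∫ t in (0:ℝ)..(2*π), |Real.cos (n * t - φ)| = 4 := by
    rw [intervalIntegral.integral_comp_mul_sub (fun x => |Real.cos x|) hn0 φ]
    have h1 : (n:ℝ) * 0 - φ = -φ := by ring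
    have h2 : (n:ℝ) * (2 * π) - φ = -φ + (n : ℤ) • (2 * π) := by
      rw [zsmul_eq_mul]; push_cast; ring
    rw [h1, h2, abs_cos_period.intervalIntegral_add_zsmul_eq (n : ℤ) (-φ) abs_cos_intInt,
      abs_cos_period.intervalIntegral_add_eq (-φ) (-(π/2)), int_abs_cos_one_period]
    rw [zsmul_eq_mul, smul_eq_mul]
    push_cast
    field_simp
  calc ∫ t in (0:ℝ)..(2*π), min (Real.cos (n * t - φ)) 0
      = ∫ t in (0:ℝ)..(2*π), (Real.cos (n * t - φ) - |Real.cos (n * t - φ)|) / 2 := by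
        simp_rw [min_zero_eq]
    _ = ((∫ t in (0:ℝ)..(2*π), Real.cos (n * t - φ))
          - ∫ t in (0:ℝ)..(2*π), |Real.cos (n * t - φ)|) / 2 := by
        rw [intervalIntegral.integral_div, intervalIntegral.integral_sub
          (hcont.intervalIntegrable _ _) (hcont.abs.intervalIntegrable _ _)]
    _ = -2 := by rw [hA, hB]; norm_num
end

section
/- Suppose x : ℝ → ℝ is a 2π-periodic C² solution of x'' + f(x)x' + g(x) + n²x = e(t), where e is continuous and 2π-periodic, f, g are continuous, F(x) = ∫₀ˣ f, the finite limits F(±∞), g(±∞) exist, and F(−∞) < F(s) < F(∞), g(−∞) < g(s) < g(∞) for all real s. Let A_n = ∫₀^{2π} e(t)cos(nt) dt and B_n = ∫₀^{2π} e(t)sin(nt) dt. Then √(A_n² + B_n²) < 2n(F(∞) − F(−∞)) + 2(g(∞) − g(−∞)). -/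
open Real MeasureTheory Filter intervalIntegral

lemma coslin_hasDeriv (a b t : ℝ) :
    HasDerivAt (fun t => Real.cos (a * t - b)) (-(a * Real.sin (a * t - b))) t := by
  have h : HasDerivAt (fun t : ℝ => a * t - b) a t := by
    simpa using ((hasDerivAt_id t).const_mul a).sub_const b
  simpa [mul_comm, Function.comp_def] using (Real.hasDerivAt_cos (a * t - b)).comp t h

lemma sinlin_hasDeriv (a b t : ℝ) :
    HasDerivAt (fun t => Real.sin (a * t - b)) (a * Real.cos (a * t - b)) t := by
  have h : HasDerivAt (fun t : ℝ => a * t - b) a t := by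
    simpa using ((hasDerivAt_id t).const_mul a).sub_const b
  simpa [mul_comm, Function.comp_def] using (Real.hasDerivAt_sin (a * t - b)).comp t h

lemma int_sinlin (n : ℕ) (hn : 1 ≤ n) (φ : ℝ) :
    ∫ t in (0:ℝ)..(2*π), Real.sin ((n:ℝ) * t - φ) = 0 := by
  have hn0 : (n:ℝ) ≠ 0 := Nat.cast_ne_zero.mpr (by omega)
  have hder : ∀ t ∈ Set.uIcc (0:ℝ) (2*π),
      HasDerivAt (fun t => -(1/(n:ℝ)) * Real.cos ((n:ℝ) * t - φ)) (Real.sin ((n:ℝ)*t - φ)) t := by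
    intro t _
    have := (coslin_hasDeriv (n:ℝ) φ t).const_mul (-(1/(n:ℝ)))
    convert this using 1
    · rfl
    · rfl
    field_simp
  rw [intervalIntegral.integral_eq_sub_of_hasDerivAt hder
    ((Real.continuous_sin.comp (by continuity)).intervalIntegrable _ _)]
  rw [Real.cos_nat_mul_two_pi_sub]
  simp [Real.cos_neg]

lemma int_coslin (n : ℕ) (hn : 1 ≤ n) (φ : ℝ) :
    ∫ t in (0:ℝ)..(2*π), Real.cos ((n:ℝ) * t - φ) = 0 := by
  have hn0 : (n:ℝ) ≠ 0 := Nat.cast_ne_zero.mpr (by omega)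
  have hder : ∀ t ∈ Set.uIcc (0:ℝ) (2*π),
      HasDerivAt (fun t => (1/(n:ℝ)) * Real.sin ((n:ℝ) * t - φ)) (Real.cos ((n:ℝ)*t - φ)) t := by
    intro t _
    have := (sinlin_hasDeriv (n:ℝ) φ t).const_mul (1/(n:ℝ))
    convert this using 1
    · rfl
    · rfl
    field_simp
  rw [intervalIntegral.integral_eq_sub_of_hasDerivAt hder
    ((Real.continuous_cos.comp (by continuity)).intervalIntegrable _ _)]
  rw [Real.sin_nat_mul_two_pi_sub]
  simp [Real.sin_neg]

lemma abs_sin_periodic : Function.Periodic (fun u : ℝ => |Real.sin u|) π := by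
  intro u; simp [Real.sin_add_pi]

lemma int_abs_sin_pi : ∫ u in (0:ℝ)..π, |Real.sin u| = 2 := by
  rw [intervalIntegral.integral_congr (g := Real.sin)]
  · rw [integral_sin]; norm_num
  · intro u hu
    rw [Set.uIcc_of_le Real.pi_nonneg] at hu
    exact abs_of_nonneg (Real.sin_nonneg_of_mem_Icc hu)

lemma int_abs_sinlin (n : ℕ) (hn : 1 ≤ n) (φ : ℝ) :
    ∫ t in (0:ℝ)..(2*π), |Real.sin ((n:ℝ) * t - φ)| = 4 := by
  have hn0 : (n:ℝ) ≠ 0 := Nat.cast_ne_zero.mpr (by omega)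
  have h1 : ∫ t in (0:ℝ)..(2*π), |Real.sin ((n:ℝ) * t - φ)|
      = (n:ℝ)⁻¹ • ∫ u in ((n:ℝ)*0)..((n:ℝ)*(2*π)), |Real.sin (u - φ)| :=
    intervalIntegral.integral_comp_mul_left (fun u => |Real.sin (u - φ)|) hn0
  have h2 : ∫ u in ((n:ℝ)*0)..((n:ℝ)*(2*π)), |Real.sin (u - φ)|
      = ∫ v in ((n:ℝ)*0 - φ)..((n:ℝ)*(2*π) - φ), |Real.sin v| :=
    intervalIntegral.integral_comp_sub_right (fun v => |Real.sin v|) φ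
  have hint : ∀ t₁ t₂ : ℝ, IntervalIntegrable (fun u : ℝ => |Real.sin u|)
      MeasureSpace.volume t₁ t₂ := fun t₁ t₂ => (Real.continuous_sin.abs).intervalIntegrable _ _
  have h3 : ((n:ℝ)*(2*π) - φ) = (-φ) + ((2*n : ℤ) • π) := by
    rw [zsmul_eq_mul]; push_cast; ring
  have h4 : ∫ v in (-φ)..((-φ) + ((2*n : ℤ) • π)), |Real.sin v|
      = (2*n : ℤ) • ∫ v in (-φ)..((-φ) + π), |Real.sin v| :=
    abs_sin_periodic.intervalIntegral_add_zsmul_eq (2*n : ℤ) (-φ) hint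
  have h5 : ∫ v in (-φ)..((-φ) + π), |Real.sin v| = ∫ v in (0:ℝ)..(0 + π), |Real.sin v| :=
    abs_sin_periodic.intervalIntegral_add_eq (-φ) 0
  rw [h1, h2]
  rw [show ((n:ℝ)*0 - φ) = -φ by ring, h3, h4, h5]
  rw [show ((0:ℝ) + π) = π by ring, int_abs_sin_pi]
  field_simp
  ring
  simp [hn0]

lemma int_abs_coslin (n : ℕ) (hn : 1 ≤ n) (φ : ℝ) :
    ∫ t in (0:ℝ)..(2*π), |Real.cos ((n:ℝ) * t - φ)| = 4 := by
  have := int_abs_sinlin n hn (φ - π/2)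
  have he : ∀ t : ℝ, Real.sin ((n:ℝ) * t - (φ - π/2)) = Real.cos ((n:ℝ) * t - φ) := by
    intro t
    rw [show (n:ℝ) * t - (φ - π/2) = ((n:ℝ) * t - φ) + π/2 by ring, Real.sin_add_pi_div_two]
  simpa only [he] using this


lemma pt_bound {lo hi v σ : ℝ} (h1 : lo < v) (h2 : v < hi) :
    v * σ ≤ (lo+hi)/2 * σ + (hi-lo)/2 * |σ| := by
  have h3 : |v - (lo+hi)/2| ≤ (hi-lo)/2 := abs_le.mpr ⟨by linarith, by linarith⟩
  have h4 : (v - (lo+hi)/2) * σ ≤ |v - (lo+hi)/2| * |σ| := by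
    rw [← abs_mul]; exact le_abs_self _
  have h5 : |v - (lo+hi)/2| * |σ| ≤ (hi-lo)/2 * |σ| :=
    mul_le_mul_of_nonneg_right h3 (abs_nonneg _)
  nlinarith [h4, h5]

lemma pt_bound_lt {lo hi v σ : ℝ} (h1 : lo < v) (h2 : v < hi) (hσ : σ ≠ 0) :
    v * σ < (lo+hi)/2 * σ + (hi-lo)/2 * |σ| := by
  have hσ' : 0 < |σ| := abs_pos.mpr hσ
  have h3 : |v - (lo+hi)/2| < (hi-lo)/2 := abs_lt.mpr ⟨by linarith, by linarith⟩
  have h4 : (v - (lo+hi)/2) * σ ≤ |v - (lo+hi)/2| * |σ| := by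
    rw [← abs_mul]; exact le_abs_self _
  have h5 : |v - (lo+hi)/2| * |σ| < (hi-lo)/2 * |σ| :=
    mul_lt_mul_of_pos_right h3 hσ'
  nlinarith [h4, h5]

set_option maxHeartbeats 1000000 in
theorem stmt_6 (n : ℕ) (hn : 1 ≤ n)
    (e f g : ℝ → ℝ) (he : Continuous e) (heper : Function.Periodic e (2 * π))
    (hf : Continuous f) (hg : Continuous g)
    (F : ℝ → ℝ) (hF : ∀ s, F s = ∫ u in (0:ℝ)..s, f u)
    (Fm Fp gm gp : ℝ)
    (hFm : Tendsto F atBot (nhds Fm)) (hFp : Tendsto F atTop (nhds Fp))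
    (hgm : Tendsto g atBot (nhds gm)) (hgp : Tendsto g atTop (nhds gp))
    (hFb : ∀ s, Fm < F s ∧ F s < Fp) (hgb : ∀ s, gm < g s ∧ g s < gp)
    (x : ℝ → ℝ) (hx : ContDiff ℝ 2 x) (hxper : Function.Periodic x (2 * π))
    (heq : ∀ t, deriv (deriv x) t + f (x t) * deriv x t + g (x t) + n ^ 2 * x t = e t)
    (An Bn : ℝ)
    (hA : An = ∫ t in (0:ℝ)..(2 * π), e t * Real.cos (n * t))
    (hB : Bn = ∫ t in (0:ℝ)..(2 * π), e t * Real.sin (n * t)) :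
    Real.sqrt (An ^ 2 + Bn ^ 2) < 2 * n * (Fp - Fm) + 2 * (gp - gm) := by
  have hπ : (0:ℝ) < π := Real.pi_pos
  have h2π : (0:ℝ) < 2*π := by linarith
  have hn0 : (n:ℝ) ≠ 0 := Nat.cast_ne_zero.mpr (by omega)
  have hn1 : (1:ℝ) ≤ (n:ℝ) := by exact_mod_cast hn
  have hFlt : Fm < Fp := lt_trans (hFb 0).1 (hFb 0).2
  have hglt : gm < gp := lt_trans (hgb 0).1 (hgb 0).2
  -- choose the phase φ
  obtain ⟨φ, hφ⟩ : ∃ φ : ℝ, An * Real.cos φ + Bn * Real.sin φ = Real.sqrt (An^2 + Bn^2) := by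
    by_cases h0 : An = 0 ∧ Bn = 0
    · exact ⟨0, by simp [h0.1, h0.2]⟩
    · set z : ℂ := ⟨An, Bn⟩ with hz
      have hzne : z ≠ 0 := by
        intro hc
        exact h0 ⟨by simpa using congrArg Complex.re hc, by simpa using congrArg Complex.im hc⟩
      have habs : ‖z‖ = Real.sqrt (An^2 + Bn^2) := by
        rw [Complex.norm_def, Complex.normSq_mk]; ring_nf
      have hrpos : 0 < Real.sqrt (An^2 + Bn^2) := by
        rw [← habs]; exact norm_pos_iff.mpr hzne
      refine ⟨Complex.arg z, ?_⟩
      rw [Complex.cos_arg hzne, Complex.sin_arg, habs]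
      have hsq : Real.sqrt (An^2 + Bn^2) ^ 2 = An^2 + Bn^2 :=
        Real.sq_sqrt (by positivity)
      have hrne : Real.sqrt (An^2 + Bn^2) ≠ 0 := ne_of_gt hrpos
      show An * (An / Real.sqrt (An^2 + Bn^2)) + Bn * (Bn / Real.sqrt (An^2 + Bn^2))
          = Real.sqrt (An^2 + Bn^2)
      field_simp
      nlinarith [hsq]
  -- smoothness facts
  have hxdiff : Differentiable ℝ x := hx.differentiable (by norm_num)
  have hx2 : ContDiff ℝ ((1 : WithTop ℕ∞)+1) x := by
    exact (by norm_num : ((1 : WithTop ℕ∞)+1) = 2) ▸ hx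
  have hx1 : ContDiff ℝ 1 (deriv x) := (contDiff_succ_iff_deriv.mp hx2).2.2
  have hx'diff : Differentiable ℝ (deriv x) := hx1.differentiable one_ne_zero
  have hx''cont : Continuous (deriv (deriv x)) := hx1.continuous_deriv le_rfl
  have hx'cont : Continuous (deriv x) := hx'diff.continuous
  have hxcont : Continuous x := hxdiff.continuous
  have hx'per : Function.Periodic (deriv x) (2*π) := by
    intro t
    have h1 : HasDerivAt (fun s => x (s + 2*π)) (deriv x (t + 2*π)) t := by
      simpa [Function.comp_def] using HasDerivAt.comp t (hxdiff (t + 2*π)).hasDerivAt ((hasDerivAt_id t).add_const (2*π))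
    rw [funext hxper] at h1
    exact h1.deriv.symm
  -- F facts
  have hFder : ∀ s, HasDerivAt F (f s) s := by
    intro s
    have : HasDerivAt (fun u => ∫ v in (0:ℝ)..u, f v) (f s) s :=
      (hf.integral_hasStrictDerivAt 0 s).hasDerivAt
    have hFfun : F = fun u => ∫ v in (0:ℝ)..u, f v := funext hF
    rw [hFfun]; exact this
  have hFcont : Continuous F := (Differentiable.continuous (fun s => (hFder s).differentiableAt))
  -- continuity of trig factors
  have hlin : Continuous (fun t : ℝ => (n:ℝ)*t - φ) := by fun_prop
  have hccont : Continuous (fun t : ℝ => Real.cos ((n:ℝ)*t - φ)) := Real.continuous_cos.comp hlin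
  have hscont : Continuous (fun t : ℝ => Real.sin ((n:ℝ)*t - φ)) := Real.continuous_sin.comp hlin
  -- sqrt = ∫ e·cos(nt-φ)
  have hiA : IntervalIntegrable (fun t => e t * Real.cos ((n:ℝ)*t) * Real.cos φ)
      MeasureSpace.volume 0 (2*π) := Continuous.intervalIntegrable (by fun_prop) _ _
  have hiB : IntervalIntegrable (fun t => e t * Real.sin ((n:ℝ)*t) * Real.sin φ)
      MeasureSpace.volume 0 (2*π) := Continuous.intervalIntegrable (by fun_prop) _ _
  have hr : Real.sqrt (An^2 + Bn^2) = ∫ t in (0:ℝ)..(2*π), e t * Real.cos ((n:ℝ)*t - φ) := by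
    rw [← hφ, hA, hB, ← intervalIntegral.integral_mul_const, ← intervalIntegral.integral_mul_const,
      ← intervalIntegral.integral_add hiA hiB]
    apply intervalIntegral.integral_congr
    intro t _
    simp only [Real.cos_sub]
    ring
  -- boundary values
  have hc2π : Real.cos ((n:ℝ)*(2*π) - φ) = Real.cos ((n:ℝ)*0 - φ) := by
    rw [Real.cos_nat_mul_two_pi_sub]
    simp [Real.cos_neg]
  have hs2π : Real.sin ((n:ℝ)*(2*π) - φ) = Real.sin ((n:ℝ)*0 - φ) := by
    rw [Real.sin_nat_mul_two_pi_sub]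
    simp [Real.sin_neg]
  have hxp : x (2*π) = x 0 := by simpa using hxper 0
  have hx'p : deriv x (2*π) = deriv x 0 := by simpa using hx'per 0
  -- integrability facts
  have hi1 : IntervalIntegrable (fun t => deriv (deriv x) t * Real.cos ((n:ℝ)*t - φ))
      MeasureSpace.volume 0 (2*π) := Continuous.intervalIntegrable (by fun_prop) _ _
  have hi2 : IntervalIntegrable (fun t => f (x t) * deriv x t * Real.cos ((n:ℝ)*t - φ))
      MeasureSpace.volume 0 (2*π) := Continuous.intervalIntegrable (by fun_prop) _ _
  have hi3 : IntervalIntegrable (fun t => g (x t) * Real.cos ((n:ℝ)*t - φ))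
      MeasureSpace.volume 0 (2*π) := Continuous.intervalIntegrable (by fun_prop) _ _
  have hi4 : IntervalIntegrable (fun t => (n:ℝ)^2 * (x t * Real.cos ((n:ℝ)*t - φ)))
      MeasureSpace.volume 0 (2*π) := Continuous.intervalIntegrable (by fun_prop) _ _
  have hi5 : IntervalIntegrable (fun t => deriv x t * Real.sin ((n:ℝ)*t - φ))
      MeasureSpace.volume 0 (2*π) := Continuous.intervalIntegrable (by fun_prop) _ _
  have hi6 : IntervalIntegrable (fun t => x t * ((n:ℝ) * Real.cos ((n:ℝ)*t - φ)))
      MeasureSpace.volume 0 (2*π) := Continuous.intervalIntegrable (by fun_prop) _ _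
  have hi7 : IntervalIntegrable (fun t => deriv x t * -((n:ℝ) * Real.sin ((n:ℝ)*t - φ)))
      MeasureSpace.volume 0 (2*π) := Continuous.intervalIntegrable (by fun_prop) _ _
  have hi8 : IntervalIntegrable (fun t => F (x t) * -((n:ℝ) * Real.sin ((n:ℝ)*t - φ)))
      MeasureSpace.volume 0 (2*π) := Continuous.intervalIntegrable (by fun_prop) _ _
  -- IBP 2 : ∫ x' s = -(n ∫ x c)
  have ibp2 := intervalIntegral.integral_deriv_mul_eq_sub
    (u := x) (v := fun t => Real.sin ((n:ℝ)*t - φ))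
    (u' := deriv x) (v' := fun t => (n:ℝ) * Real.cos ((n:ℝ)*t - φ))
    (a := 0) (b := 2*π)
    (fun t _ => (hxdiff t).hasDerivAt) (fun t _ => sinlin_hasDeriv _ _ t)
    (hx'cont.intervalIntegrable _ _) (Continuous.intervalIntegrable (by fun_prop) _ _)
  beta_reduce at ibp2
  rw [intervalIntegral.integral_add hi5 hi6] at ibp2
  have e2 : ∀ t:ℝ, x t * ((n:ℝ) * Real.cos ((n:ℝ)*t - φ))
      = (n:ℝ) * (x t * Real.cos ((n:ℝ)*t - φ)) := fun t => by ring
  simp only [e2] at ibp2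
  rw [intervalIntegral.integral_const_mul, hxp, hs2π] at ibp2
  have ibp2' : (∫ t in (0:ℝ)..(2*π), deriv x t * Real.sin ((n:ℝ)*t - φ))
      = -((n:ℝ) * ∫ t in (0:ℝ)..(2*π), x t * Real.cos ((n:ℝ)*t - φ)) := by linarith [ibp2]
  -- IBP 1 : ∫ x'' c = n * ∫ x' s
  have ibp1 := intervalIntegral.integral_deriv_mul_eq_sub
    (u := deriv x) (v := fun t => Real.cos ((n:ℝ)*t - φ))
    (u' := deriv (deriv x)) (v' := fun t => -((n:ℝ) * Real.sin ((n:ℝ)*t - φ)))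
    (a := 0) (b := 2*π)
    (fun t _ => (hx'diff t).hasDerivAt) (fun t _ => coslin_hasDeriv _ _ t)
    (hx''cont.intervalIntegrable _ _) (Continuous.intervalIntegrable (by fun_prop) _ _)
  beta_reduce at ibp1
  rw [intervalIntegral.integral_add hi1 hi7] at ibp1
  have e1 : ∀ t:ℝ, deriv x t * -((n:ℝ) * Real.sin ((n:ℝ)*t - φ))
      = (-(n:ℝ)) * (deriv x t * Real.sin ((n:ℝ)*t - φ)) := fun t => by ring
  simp only [e1] at ibp1
  rw [intervalIntegral.integral_const_mul, hx'p, hc2π] at ibp1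
  have hI1 : (∫ t in (0:ℝ)..(2*π), deriv (deriv x) t * Real.cos ((n:ℝ)*t - φ))
      = -((n:ℝ)^2 * ∫ t in (0:ℝ)..(2*π), x t * Real.cos ((n:ℝ)*t - φ)) := by
    have h : (∫ t in (0:ℝ)..(2*π), deriv (deriv x) t * Real.cos ((n:ℝ)*t - φ))
        = (n:ℝ) * ∫ t in (0:ℝ)..(2*π), deriv x t * Real.sin ((n:ℝ)*t - φ) := by linarith [ibp1]
    rw [h, ibp2']
    ring
  -- IBP 3 : ∫ f(x)x' c = n * ∫ F(x) s
  have hFxder : ∀ t : ℝ, HasDerivAt (fun t => F (x t)) (f (x t) * deriv x t) t := by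
    intro t
    simpa [Function.comp_def] using HasDerivAt.comp t (hFder (x t)) (hxdiff t).hasDerivAt
  have hFxcont : Continuous (fun t => F (x t)) := hFcont.comp hxcont
  have ibp3 := intervalIntegral.integral_deriv_mul_eq_sub
    (u := fun t => F (x t)) (v := fun t => Real.cos ((n:ℝ)*t - φ))
    (u' := fun t => f (x t) * deriv x t) (v' := fun t => -((n:ℝ) * Real.sin ((n:ℝ)*t - φ)))
    (a := 0) (b := 2*π)
    (fun t _ => hFxder t) (fun t _ => coslin_hasDeriv _ _ t)
    (Continuous.intervalIntegrable (by fun_prop) _ _)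
    (Continuous.intervalIntegrable (by fun_prop) _ _)
  beta_reduce at ibp3
  rw [intervalIntegral.integral_add hi2 hi8] at ibp3
  have e3 : ∀ t:ℝ, F (x t) * -((n:ℝ) * Real.sin ((n:ℝ)*t - φ))
      = (-(n:ℝ)) * (F (x t) * Real.sin ((n:ℝ)*t - φ)) := fun t => by ring
  simp only [e3] at ibp3
  rw [intervalIntegral.integral_const_mul, hxp, hc2π] at ibp3
  have ibp3' : (∫ t in (0:ℝ)..(2*π), f (x t) * deriv x t * Real.cos ((n:ℝ)*t - φ))
      = (n:ℝ) * ∫ t in (0:ℝ)..(2*π), F (x t) * Real.sin ((n:ℝ)*t - φ) := by linarith [ibp3]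
  -- split ∫ e c into four pieces
  have hintegrand : ∀ t : ℝ, e t * Real.cos ((n:ℝ)*t - φ)
      = deriv (deriv x) t * Real.cos ((n:ℝ)*t - φ)
        + (f (x t) * deriv x t * Real.cos ((n:ℝ)*t - φ)
        + (g (x t) * Real.cos ((n:ℝ)*t - φ)
        + (n:ℝ)^2 * (x t * Real.cos ((n:ℝ)*t - φ)))) := by
    intro t
    rw [← heq t]
    push_cast
    ring
  have hsplit : ∫ t in (0:ℝ)..(2*π), e t * Real.cos ((n:ℝ)*t - φ)
      = (∫ t in (0:ℝ)..(2*π), deriv (deriv x) t * Real.cos ((n:ℝ)*t - φ))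
        + ((∫ t in (0:ℝ)..(2*π), f (x t) * deriv x t * Real.cos ((n:ℝ)*t - φ))
        + ((∫ t in (0:ℝ)..(2*π), g (x t) * Real.cos ((n:ℝ)*t - φ))
        + (n:ℝ)^2 * ∫ t in (0:ℝ)..(2*π), x t * Real.cos ((n:ℝ)*t - φ))) := by
    rw [intervalIntegral.integral_congr (g := fun t => deriv (deriv x) t * Real.cos ((n:ℝ)*t - φ)
        + (f (x t) * deriv x t * Real.cos ((n:ℝ)*t - φ)
        + (g (x t) * Real.cos ((n:ℝ)*t - φ)
        + (n:ℝ)^2 * (x t * Real.cos ((n:ℝ)*t - φ))))) (fun t _ => hintegrand t)]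
    rw [intervalIntegral.integral_add hi1 (hi2.add (hi3.add hi4)),
      intervalIntegral.integral_add hi2 (hi3.add hi4),
      intervalIntegral.integral_add hi3 hi4,
      intervalIntegral.integral_const_mul]
  -- main identity
  have hmain : Real.sqrt (An^2 + Bn^2)
      = (n:ℝ) * (∫ t in (0:ℝ)..(2*π), F (x t) * Real.sin ((n:ℝ)*t - φ))
        + ∫ t in (0:ℝ)..(2*π), g (x t) * Real.cos ((n:ℝ)*t - φ) := by
    rw [hr, hsplit, hI1, ibp3']
    ring
  -- bound on the F-term
  have hFbound : (∫ t in (0:ℝ)..(2*π), F (x t) * Real.sin ((n:ℝ)*t - φ)) ≤ 2*(Fp - Fm) := by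
    have hmono : (∫ t in (0:ℝ)..(2*π), F (x t) * Real.sin ((n:ℝ)*t - φ))
        ≤ ∫ t in (0:ℝ)..(2*π), ((Fm+Fp)/2 * Real.sin ((n:ℝ)*t - φ)
            + (Fp-Fm)/2 * |Real.sin ((n:ℝ)*t - φ)|) := by
      apply intervalIntegral.integral_mono_on (by linarith)
        (Continuous.intervalIntegrable (by fun_prop) _ _)
        (Continuous.intervalIntegrable (by fun_prop) _ _)
      intro t _
      exact pt_bound (hFb (x t)).1 (hFb (x t)).2
    have hval : ∫ t in (0:ℝ)..(2*π), ((Fm+Fp)/2 * Real.sin ((n:ℝ)*t - φ)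
        + (Fp-Fm)/2 * |Real.sin ((n:ℝ)*t - φ)|) = 2*(Fp - Fm) := by
      rw [intervalIntegral.integral_add (Continuous.intervalIntegrable (by fun_prop) _ _)
          (Continuous.intervalIntegrable (by fun_prop) _ _),
        intervalIntegral.integral_const_mul, intervalIntegral.integral_const_mul,
        int_sinlin n hn φ, int_abs_sinlin n hn φ]
      ring
    linarith
  -- strict bound on the g-term
  have ht0 : ∃ t₀ ∈ Set.Icc (0:ℝ) (2*π), Real.cos ((n:ℝ)*t₀ - φ) ≠ 0 := by
    by_contra hcon
    push_neg at hcon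
    have h1 : Real.cos ((n:ℝ)*0 - φ) = 0 := hcon 0 ⟨le_refl _, by linarith⟩
    have hmem : (π/(2*(n:ℝ))) ∈ Set.Icc (0:ℝ) (2*π) := by
      constructor
      · positivity
      · rw [div_le_iff₀ (by positivity)]
        have h4 : (1:ℝ) ≤ 2*(2*(n:ℝ)) := by linarith
        have h5 := mul_le_mul_of_nonneg_left h4 hπ.le
        linarith [h5]
    have h2 : Real.cos ((n:ℝ)*(π/(2*(n:ℝ))) - φ) = 0 := hcon _ hmem
    have hhalf : (n:ℝ)*(π/(2*(n:ℝ))) = π/2 := by field_simp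
    rw [show (n:ℝ)*(π/(2*(n:ℝ))) - φ = ((n:ℝ)*0 - φ) + π/2 by rw [hhalf]; ring,
      Real.cos_add_pi_div_two] at h2
    have hpyth := Real.sin_sq_add_cos_sq ((n:ℝ)*0 - φ)
    simp only [neg_eq_zero] at h2
    rw [h1, h2] at hpyth
    norm_num at hpyth
  obtain ⟨t₀, ht₀mem, ht₀⟩ := ht0
  have hgbound : (∫ t in (0:ℝ)..(2*π), g (x t) * Real.cos ((n:ℝ)*t - φ)) < 2*(gp - gm) := by
    have hlt : (∫ t in (0:ℝ)..(2*π), g (x t) * Real.cos ((n:ℝ)*t - φ))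
        < ∫ t in (0:ℝ)..(2*π), ((gm+gp)/2 * Real.cos ((n:ℝ)*t - φ)
            + (gp-gm)/2 * |Real.cos ((n:ℝ)*t - φ)|) := by
      apply intervalIntegral.integral_lt_integral_of_continuousOn_of_le_of_exists_lt h2π
        (Continuous.continuousOn (by fun_prop))
        (Continuous.continuousOn (by fun_prop))
      · intro t _
        exact pt_bound (hgb (x t)).1 (hgb (x t)).2
      · exact ⟨t₀, ht₀mem, pt_bound_lt (hgb (x t₀)).1 (hgb (x t₀)).2 ht₀⟩
    have hval : ∫ t in (0:ℝ)..(2*π), ((gm+gp)/2 * Real.cos ((n:ℝ)*t - φ)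
        + (gp-gm)/2 * |Real.cos ((n:ℝ)*t - φ)|) = 2*(gp - gm) := by
      rw [intervalIntegral.integral_add (Continuous.intervalIntegrable (by fun_prop) _ _)
          (Continuous.intervalIntegrable (by fun_prop) _ _),
        intervalIntegral.integral_const_mul, intervalIntegral.integral_const_mul,
        int_coslin n hn φ, int_abs_coslin n hn φ]
      ring
    linarith
  -- conclude
  have hnpos : (0:ℝ) < (n:ℝ) := by linarith
  have hFmul : (n:ℝ) * (∫ t in (0:ℝ)..(2*π), F (x t) * Real.sin ((n:ℝ)*t - φ))
      ≤ (n:ℝ) * (2*(Fp - Fm)) := mul_le_mul_of_nonneg_left hFbound (le_of_lt hnpos)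
  rw [hmain]
  linarith [hFmul, hgbound]
end

section
/- Suppose x : ℝ → ℝ is a 2π-periodic C² solution of x'' + f(x)x' + g(x) + n²x = e(t), where e is continuous and 2π-periodic, f, g are continuous, F(x) = ∫₀ˣ f, and F and g are bounded with finite infimum and supremum on ℝ. Let A_n = ∫₀^{2π} e(t)cos(nt) dt and B_n = ∫₀^{2π} e(t)sin(nt) dt. If F and g are non-constant, then √(A_n² + B_n²) < 2n(sup F − inf F) + 2(sup g − inf g). -/
open Real MeasureTheory Filter
open scoped ENNReal

namespace Stmt7Aux


/-- integral over a period of a shifted-scaled periodic function -/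
lemma per_comp (h : ℝ → ℝ) (hc : Continuous h) (hp : Function.Periodic h (2*π))
    (n : ℕ) (hn : 1 ≤ n) (θ : ℝ) :
    ∫ t in (0:ℝ)..(2*π), h (n*t - θ) = ∫ t in (0:ℝ)..(2*π), h t := by
  have hne : (n:ℝ) ≠ 0 := by positivity
  have hint : ∀ t₁ t₂ : ℝ, IntervalIntegrable h volume t₁ t₂ :=
    fun t₁ t₂ => hc.intervalIntegrable t₁ t₂
  rw [intervalIntegral.integral_comp_mul_sub (f := h) hne θ]
  have h1 : ((n:ℝ) * 0 - θ) = -θ := by ring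
  have h2 : ((n:ℝ) * (2*π) - θ) = -θ + (n:ℤ) • (2*π) := by
    rw [zsmul_eq_mul]; push_cast; ring
  rw [h1, h2, hp.intervalIntegral_add_zsmul_eq (n:ℤ) (-θ) hint,
    hp.intervalIntegral_add_eq (-θ) 0]
  rw [zsmul_eq_mul, smul_eq_mul, ← mul_assoc]
  push_cast
  rw [inv_mul_cancel₀ hne, one_mul, zero_add]

lemma abs_sin_int : ∫ t in (0:ℝ)..(2*π), |Real.sin t| = 4 := by
  have hpi := Real.pi_pos
  have h1 : ∫ t in (0:ℝ)..π, |Real.sin t| = 2 := by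
    have : ∀ t ∈ Set.uIcc (0:ℝ) π, |Real.sin t| = Real.sin t := by
      intro t ht
      rw [Set.uIcc_of_le hpi.le] at ht
      exact abs_of_nonneg (Real.sin_nonneg_of_nonneg_of_le_pi ht.1 ht.2)
    rw [intervalIntegral.integral_congr this]
    simp [integral_sin]; norm_num
  have h2 : ∫ t in π..(2*π), |Real.sin t| = 2 := by
    have : ∀ t ∈ Set.uIcc π (2*π), |Real.sin t| = -Real.sin t := by
      intro t ht
      rw [Set.uIcc_of_le (by linarith)] at ht
      obtain ⟨ht1, ht2⟩ := ht
      refine abs_of_nonpos ?_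
      have h := Real.sin_nonneg_of_nonneg_of_le_pi (x := t - π) (by linarith) (by linarith)
      rw [Real.sin_sub_pi] at h; linarith
    rw [intervalIntegral.integral_congr this, intervalIntegral.integral_neg]
    simp [integral_sin, Real.cos_two_pi, Real.cos_pi]; norm_num
  rw [← intervalIntegral.integral_add_adjacent_intervals (a := (0:ℝ)) (b := π) (c := 2*π)
    (Real.continuous_sin.abs.intervalIntegrable _ _)
    (Real.continuous_sin.abs.intervalIntegrable _ _), h1, h2]
  norm_num

lemma sin_shift_int (n : ℕ) (hn : 1 ≤ n) (θ : ℝ) :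
    ∫ t in (0:ℝ)..(2*π), Real.sin (n*t - θ) = 0 := by
  rw [per_comp Real.sin Real.continuous_sin Real.sin_periodic n hn θ]
  simp [integral_sin]

lemma abs_sin_shift_int (n : ℕ) (hn : 1 ≤ n) (θ : ℝ) :
    ∫ t in (0:ℝ)..(2*π), |Real.sin (n*t - θ)| = 4 := by
  rw [per_comp (fun t => |Real.sin t|) Real.continuous_sin.abs
    (fun t => by simp [Real.sin_periodic t]) n hn θ]
  exact abs_sin_int

/-- periodicity of the derivative -/
lemma per_deriv {x : ℝ → ℝ} {c : ℝ} (hp : Function.Periodic x c) :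
    Function.Periodic (deriv x) c := by
  intro t
  have h1 : (fun s => x (s + c)) = x := funext hp
  calc deriv x (t + c) = deriv (fun s => x (s + c)) t := (deriv_comp_add_const x c t).symm
  _ = deriv x t := by rw [h1]

/-- integration by parts for periodic functions -/
lemma ibp_per (u v u' v' : ℝ → ℝ)
    (hu : ∀ t, HasDerivAt u (u' t) t) (hv : ∀ t, HasDerivAt v (v' t) t)
    (hu' : Continuous u') (hv' : Continuous v')
    (hup : Function.Periodic u (2*π)) (hvp : Function.Periodic v (2*π)) :
    ∫ t in (0:ℝ)..(2*π), u' t * v t = - ∫ t in (0:ℝ)..(2*π), u t * v' t := by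
  have hcu : Continuous u := Differentiable.continuous (fun t => (hu t).differentiableAt)
  have hcv : Continuous v := Differentiable.continuous (fun t => (hv t).differentiableAt)
  have key := intervalIntegral.integral_deriv_mul_eq_sub_of_hasDerivAt (a := 0) (b := 2*π)
    hcu.continuousOn hcv.continuousOn (fun t _ => hu t) (fun t _ => hv t)
    (hu'.intervalIntegrable _ _) (hv'.intervalIntegrable _ _)
  have hz : u (2*π) * v (2*π) - u 0 * v 0 = 0 := by
    have e1 : (2*π) = 0 + 2*π := by ring
    rw [e1, hup 0, hvp 0]; ring
  rw [hz, intervalIntegral.integral_add (f := fun t => u' t * v t) (g := fun t => u t * v' t) ((hu'.mul hcv).intervalIntegrable _ _)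
    ((hcu.mul hv').intervalIntegrable _ _)] at key
  linarith

/-- positivity of the integral of a nonneg continuous function positive somewhere -/
lemma integral_pos_of_nonneg (P : ℝ → ℝ) (hP : Continuous P) (a b : ℝ) (hab : a < b)
    (hnn : ∀ t, 0 ≤ P t) (t₀ : ℝ) (ht₀ : t₀ ∈ Set.Ioo a b) (hpos : 0 < P t₀) :
    0 < ∫ t in a..b, P t := by
  rw [intervalIntegral.integral_pos_iff_support_of_nonneg_ae
    (Eventually.of_forall hnn) (hP.intervalIntegrable a b)]
  refine ⟨hab, ?_⟩
  have hopen : IsOpen (P ⁻¹' Set.Ioi 0 ∩ Set.Ioo a b) :=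
    (isOpen_Ioi.preimage hP).inter isOpen_Ioo
  have hmem : t₀ ∈ P ⁻¹' Set.Ioi 0 ∩ Set.Ioo a b := ⟨hpos, ht₀⟩
  obtain ⟨c, d, hcd, hsub⟩ :=
    mem_nhds_iff_exists_Ioo_subset.mp (hopen.mem_nhds hmem)
  have hsub2 : Set.Ioo c d ⊆ Function.support P ∩ Set.Ioc a b := by
    intro s hs
    obtain ⟨hs1, hs2⟩ := hsub hs
    exact ⟨ne_of_gt hs1, Set.Ioo_subset_Ioc_self hs2⟩
  calc (0:ℝ≥0∞) < volume (Set.Ioo c d) := by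
        rw [Real.volume_Ioo]
        exact ENNReal.ofReal_pos.mpr (by linarith [hcd.1, hcd.2])
  _ ≤ volume (Function.support P ∩ Set.Ioc a b) := measure_mono hsub2


lemma bound_nonstrict (n : ℕ) (hn : 1 ≤ n) (θ : ℝ) (h : ℝ → ℝ) (hc : Continuous h)
    (c Δ : ℝ) (hbd : ∀ t, |h t - c| ≤ Δ/2) :
    ∫ t in (0:ℝ)..(2*π), h t * Real.sin (n*t - θ) ≤ 2*Δ := by
  have hpi := Real.pi_pos
  have hs : Continuous (fun t => Real.sin ((n:ℝ)*t - θ)) :=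
    Real.continuous_sin.comp ((continuous_const.mul continuous_id).sub continuous_const)
  have hΔ : 0 ≤ Δ := by have := hbd 0; have := abs_nonneg (h 0 - c); linarith
  have hint1 : IntervalIntegrable (fun t => (h t - c) * Real.sin ((n:ℝ)*t - θ)) volume 0 (2*π) :=
    (((hc.sub continuous_const).mul hs)).intervalIntegrable _ _
  have hint2 : IntervalIntegrable (fun t => c * Real.sin ((n:ℝ)*t - θ)) volume 0 (2*π) :=
    ((continuous_const.mul hs)).intervalIntegrable _ _
  have split : ∫ t in (0:ℝ)..(2*π), h t * Real.sin (n*t-θ)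
      = (∫ t in (0:ℝ)..(2*π), (h t - c) * Real.sin (n*t-θ))
        + c * ∫ t in (0:ℝ)..(2*π), Real.sin (n*t-θ) := by
    rw [← intervalIntegral.integral_const_mul, ← intervalIntegral.integral_add hint1 hint2]
    congr 1; funext t; ring
  rw [split, sin_shift_int n hn θ, mul_zero, add_zero]
  have h1 : (∫ t in (0:ℝ)..(2*π), (h t - c) * Real.sin (n*t-θ))
      ≤ ∫ t in (0:ℝ)..(2*π), Δ/2 * |Real.sin (n*t-θ)| := by
    apply intervalIntegral.integral_mono_on (by linarith) hint1
      ((continuous_const.mul hs.abs).intervalIntegrable _ _)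
    intro t ht
    calc (h t - c) * Real.sin (n*t-θ) ≤ |(h t - c) * Real.sin (n*t-θ)| := le_abs_self _
    _ = |h t - c| * |Real.sin (n*t-θ)| := abs_mul _ _
    _ ≤ Δ/2 * |Real.sin (n*t-θ)| := by
        exact mul_le_mul_of_nonneg_right (hbd t) (abs_nonneg _)
  rw [intervalIntegral.integral_const_mul, abs_sin_shift_int n hn θ] at h1
  linarith

lemma bound_strict (n : ℕ) (hn : 1 ≤ n) (θ : ℝ) (h : ℝ → ℝ) (hc : Continuous h)
    (c Δ : ℝ) (hΔ : 0 < Δ) (hbd : ∀ t, |h t - c| ≤ Δ/2) :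
    ∫ t in (0:ℝ)..(2*π), h t * Real.sin (n*t - θ) < 2*Δ := by
  have hpi := Real.pi_pos
  have hs : Continuous (fun t => Real.sin ((n:ℝ)*t - θ)) :=
    Real.continuous_sin.comp ((continuous_const.mul continuous_id).sub continuous_const)
  have hint1 : IntervalIntegrable (fun t => (h t - c) * Real.sin ((n:ℝ)*t - θ)) volume 0 (2*π) :=
    (((hc.sub continuous_const).mul hs)).intervalIntegrable _ _
  have hint2 : IntervalIntegrable (fun t => c * Real.sin ((n:ℝ)*t - θ)) volume 0 (2*π) :=
    ((continuous_const.mul hs)).intervalIntegrable _ _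
  have split : ∫ t in (0:ℝ)..(2*π), h t * Real.sin (n*t-θ)
      = (∫ t in (0:ℝ)..(2*π), (h t - c) * Real.sin (n*t-θ))
        + c * ∫ t in (0:ℝ)..(2*π), Real.sin (n*t-θ) := by
    rw [← intervalIntegral.integral_const_mul, ← intervalIntegral.integral_add hint1 hint2]
    congr 1; funext t; ring
  by_cases hall : ∀ t ∈ Set.Icc (0:ℝ) (2*π), |h t - c| = Δ/2
  · -- constant-sign case : the first integral is (±Δ/2) ∫ sin = 0
    have hsign : (∀ t ∈ Set.Icc (0:ℝ) (2*π), h t - c = Δ/2)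
        ∨ (∀ t ∈ Set.Icc (0:ℝ) (2*π), h t - c = -(Δ/2)) := by
      by_contra hcon
      push_neg at hcon
      obtain ⟨⟨t₁, ht₁, hne₁⟩, ⟨t₂, ht₂, hne₂⟩⟩ := hcon
      have hv₁ : h t₁ - c = -(Δ/2) := by
        have := hall t₁ ht₁; rcases abs_eq (by linarith : (0:ℝ) ≤ Δ/2) |>.mp this with h'|h'
        · exact absurd h' hne₁
        · exact h'
      have hv₂ : h t₂ - c = Δ/2 := by
        have := hall t₂ ht₂; rcases abs_eq (by linarith : (0:ℝ) ≤ Δ/2) |>.mp this with h'|h'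
        · exact h'
        · exact absurd h' hne₂
      have hcont : ContinuousOn (fun t => h t - c) (Set.uIcc t₁ t₂) :=
        ((hc.sub continuous_const)).continuousOn
      have hmem : (0:ℝ) ∈ Set.uIcc (h t₁ - c) (h t₂ - c) := by
        rw [hv₁, hv₂, Set.uIcc_of_le (by linarith)]
        constructor <;> linarith
      obtain ⟨t₃, ht₃, hval⟩ := intermediate_value_uIcc hcont hmem
      have ht₃' : t₃ ∈ Set.Icc (0:ℝ) (2*π) := by
        have : Set.uIcc t₁ t₂ ⊆ Set.Icc (0:ℝ) (2*π) := Set.uIcc_subset_Icc ht₁ ht₂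
        exact this ht₃
      have hval' : h t₃ - c = 0 := hval
      have := hall t₃ ht₃'
      rw [hval'] at this
      simp at this; linarith
    have hz : (∫ t in (0:ℝ)..(2*π), (h t - c) * Real.sin (n*t-θ)) = 0 := by
      rcases hsign with hsgn | hsgn
      · have : ∀ t ∈ Set.uIcc (0:ℝ) (2*π), (h t - c) * Real.sin (n*t-θ)
            = Δ/2 * Real.sin (n*t-θ) := by
          intro t ht
          rw [Set.uIcc_of_le (by linarith)] at ht
          rw [hsgn t ht]
        rw [intervalIntegral.integral_congr this, intervalIntegral.integral_const_mul,
          sin_shift_int n hn θ, mul_zero]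
      · have : ∀ t ∈ Set.uIcc (0:ℝ) (2*π), (h t - c) * Real.sin (n*t-θ)
            = -(Δ/2) * Real.sin (n*t-θ) := by
          intro t ht
          rw [Set.uIcc_of_le (by linarith)] at ht
          rw [hsgn t ht]
        rw [intervalIntegral.integral_congr this, intervalIntegral.integral_const_mul,
          sin_shift_int n hn θ, mul_zero]
    rw [split, hz, sin_shift_int n hn θ, mul_zero, add_zero]
    linarith
  · -- there is a point where |h - c| < Δ/2
    push_neg at hall
    obtain ⟨t₁, ht₁, hne₁⟩ := hall
    have hlt₁ : |h t₁ - c| < Δ/2 := lt_of_le_of_ne (hbd t₁) hne₁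
    have hU : IsOpen {t : ℝ | |h t - c| < Δ/2} :=
      isOpen_lt ((hc.sub continuous_const).abs) continuous_const
    obtain ⟨ε, hε, hball⟩ := Metric.isOpen_iff.mp hU t₁ hlt₁
    set a' := max 0 (t₁ - ε/2) with ha'
    set b' := min (2*π) (t₁ + ε/2) with hb'
    have hab' : a' < b' := by
      rw [ha', hb']
      apply max_lt <;> [skip; skip] <;> apply lt_min
      · linarith
      · obtain ⟨h1, h2⟩ := ht₁; linarith
      · obtain ⟨h1, h2⟩ := ht₁; linarith
      · linarith
    have hsubIoo : Set.Ioo a' b' ⊆ Set.Ioo (0:ℝ) (2*π) := by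
      intro s hs
      exact ⟨lt_of_le_of_lt (le_max_left _ _) hs.1, lt_of_lt_of_le hs.2 (min_le_left _ _)⟩
    have hsubU : Set.Ioo a' b' ⊆ {t : ℝ | |h t - c| < Δ/2} := by
      intro s hs
      apply hball
      rw [Metric.mem_ball, Real.dist_eq, abs_lt]
      have h1 : t₁ - ε/2 ≤ a' := le_max_right _ _
      have h2 : b' ≤ t₁ + ε/2 := min_le_right _ _
      obtain ⟨hs1, hs2⟩ := hs
      constructor <;> linarith
    -- find a point in Ioo a' b' where sin (n t - θ) ≠ 0
    have hex : ∃ t₀ ∈ Set.Ioo a' b', Real.sin ((n:ℝ)*t₀ - θ) ≠ 0 := by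
      by_contra hz
      push_neg at hz
      set u := (a' + b')/2 with hu
      have humem : u ∈ Set.Ioo a' b' := by constructor <;> (rw [hu]; linarith)
      have hd1 : HasDerivAt (fun t => Real.sin ((n:ℝ)*t - θ))
          (Real.cos ((n:ℝ)*u - θ) * n) u := by
        have inner : HasDerivAt (fun t : ℝ => (n:ℝ)*t - θ) (n:ℝ) u := by
          simpa using ((hasDerivAt_id u).const_mul (n:ℝ)).sub_const θ
        exact (Real.hasDerivAt_sin ((n:ℝ)*u - θ)).comp u inner
      have hd2 : HasDerivAt (fun t => Real.sin ((n:ℝ)*t - θ)) 0 u := by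
        apply HasDerivAt.congr_of_eventuallyEq (hasDerivAt_const u (0:ℝ))
        filter_upwards [Ioo_mem_nhds humem.1 humem.2] with s hs
        exact hz s hs
      have hcoszero : Real.cos ((n:ℝ)*u - θ) = 0 := by
        have huniq := hd1.unique hd2
        have hnne : (n:ℝ) ≠ 0 := by positivity
        rcases mul_eq_zero.mp huniq with h' | h'
        · exact h'
        · exact absurd h' hnne
      have hsinzero : Real.sin ((n:ℝ)*u - θ) = 0 := hz u humem
      have := Real.sin_sq_add_cos_sq ((n:ℝ)*u - θ)
      rw [hcoszero, hsinzero] at this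
      norm_num at this
    obtain ⟨t₀, ht₀, hsne⟩ := hex
    -- strict inequality via positivity of the defect
    set P := fun t => Δ/2 * |Real.sin ((n:ℝ)*t - θ)| - (h t - c) * Real.sin ((n:ℝ)*t - θ) with hP
    have hPc : Continuous P := (continuous_const.mul hs.abs).sub ((hc.sub continuous_const).mul hs)
    have hPnn : ∀ t, 0 ≤ P t := by
      intro t
      have : (h t - c) * Real.sin ((n:ℝ)*t - θ) ≤ Δ/2 * |Real.sin ((n:ℝ)*t - θ)| := by
        calc (h t - c) * Real.sin ((n:ℝ)*t - θ) ≤ |(h t - c) * Real.sin ((n:ℝ)*t - θ)| :=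
              le_abs_self _
        _ = |h t - c| * |Real.sin ((n:ℝ)*t - θ)| := abs_mul _ _
        _ ≤ Δ/2 * |Real.sin ((n:ℝ)*t - θ)| := mul_le_mul_of_nonneg_right (hbd t) (abs_nonneg _)
      simp only [hP]; linarith
    have hPpos : 0 < P t₀ := by
      have habs : 0 < |Real.sin ((n:ℝ)*t₀ - θ)| := abs_pos.mpr hsne
      have hlt : |h t₀ - c| < Δ/2 := hsubU ht₀
      have : (h t₀ - c) * Real.sin ((n:ℝ)*t₀ - θ) < Δ/2 * |Real.sin ((n:ℝ)*t₀ - θ)| := by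
        calc (h t₀ - c) * Real.sin ((n:ℝ)*t₀ - θ) ≤ |h t₀ - c| * |Real.sin ((n:ℝ)*t₀ - θ)| := by
              rw [← abs_mul]; exact le_abs_self _
        _ < Δ/2 * |Real.sin ((n:ℝ)*t₀ - θ)| := by
              exact mul_lt_mul_of_pos_right hlt habs
      simp only [hP]; linarith
    have hposint := integral_pos_of_nonneg P hPc 0 (2*π) (by linarith) hPnn t₀ (hsubIoo ht₀) hPpos
    have hexp : (∫ t in (0:ℝ)..(2*π), P t)
        = 2*Δ - ((∫ t in (0:ℝ)..(2*π), (h t - c) * Real.sin (n*t-θ))) := by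
      simp only [hP]
      rw [intervalIntegral.integral_sub (f := fun t => Δ/2 * |Real.sin ((n:ℝ)*t - θ)|) ((continuous_const.mul hs.abs).intervalIntegrable _ _)
        hint1, intervalIntegral.integral_const_mul, abs_sin_shift_int n hn θ]
      ring
    rw [hexp] at hposint
    rw [split, sin_shift_int n hn θ, mul_zero, add_zero]
    linarith

end Stmt7Aux

open Stmt7Aux in
theorem stmt_7 (n : ℕ) (hn : 1 ≤ n)
    (e f g : ℝ → ℝ) (he : Continuous e) (heper : Function.Periodic e (2 * π))
    (hf : Continuous f) (hg : Continuous g)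
    (F : ℝ → ℝ) (hF : ∀ s, F s = ∫ u in (0:ℝ)..s, f u)
    (hFbdd : BddAbove (Set.range F) ∧ BddBelow (Set.range F))
    (hgbdd : BddAbove (Set.range g) ∧ BddBelow (Set.range g))
    (hFnc : ∃ a b, F a ≠ F b) (hgnc : ∃ a b, g a ≠ g b)
    (x : ℝ → ℝ) (hx : ContDiff ℝ 2 x) (hxper : Function.Periodic x (2 * π))
    (heq : ∀ t, deriv (deriv x) t + f (x t) * deriv x t + g (x t) + n ^ 2 * x t = e t)
    (An Bn : ℝ)
    (hA : An = ∫ t in (0:ℝ)..(2 * π), e t * Real.cos (n * t))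
    (hB : Bn = ∫ t in (0:ℝ)..(2 * π), e t * Real.sin (n * t)) :
    Real.sqrt (An ^ 2 + Bn ^ 2)
      < 2 * n * (sSup (Set.range F) - sInf (Set.range F))
        + 2 * (sSup (Set.range g) - sInf (Set.range g)) := by
  have hpi := Real.pi_pos
  set MF := sSup (Set.range F) with hMF
  set mF := sInf (Set.range F) with hmF
  set Mg := sSup (Set.range g) with hMg
  set mg := sInf (Set.range g) with hmg
  have hFle : ∀ y, mF ≤ F y ∧ F y ≤ MF :=
    fun y => ⟨csInf_le hFbdd.2 ⟨y, rfl⟩, le_csSup hFbdd.1 ⟨y, rfl⟩⟩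
  have hgle : ∀ y, mg ≤ g y ∧ g y ≤ Mg :=
    fun y => ⟨csInf_le hgbdd.2 ⟨y, rfl⟩, le_csSup hgbdd.1 ⟨y, rfl⟩⟩
  have hΔF : 0 ≤ MF - mF := by have := hFle 0; linarith [this.1, this.2]
  have hΔg : 0 < Mg - mg := by
    obtain ⟨a, b, hab⟩ := hgnc
    have h1 := hgle a; have h2 := hgle b
    rcases hab.lt_or_gt with h | h <;> linarith [h1.1, h1.2, h2.1, h2.2]
  have hnn : (0:ℝ) ≤ (n:ℝ) := Nat.cast_nonneg n
  -- trivial case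
  rcases eq_or_lt_of_le (Real.sqrt_nonneg (An^2+Bn^2)) with hr0 | hrpos
  · rw [← hr0]
    have : 0 ≤ 2 * (n:ℝ) * (MF - mF) := by positivity
    linarith
  -- main case
  set r := Real.sqrt (An^2+Bn^2) with hr
  set z : ℂ := ⟨An, Bn⟩ with hz
  set θ := Complex.arg z with hθ
  have habs : ‖z‖ = r := by
    rw [Complex.norm_def, Complex.normSq_mk, hr]; ring_nf
  have hzne : z ≠ 0 := by
    intro h0
    rw [h0] at habs; simp at habs; rw [← habs] at hrpos; exact lt_irrefl _ hrpos
  have hrkey : An * Real.cos θ + Bn * Real.sin θ = r := by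
    rw [hθ, Complex.cos_arg hzne, Complex.sin_arg, habs]
    have hr2 : r ^ 2 = An^2 + Bn^2 := Real.sq_sqrt (by positivity)
    have : z.re = An := rfl
    have : z.im = Bn := rfl
    field_simp
    nlinarith [hr2]
  -- derivatives
  have hx11 : ContDiff ℝ ((1:WithTop ℕ∞)+1) x := by rw [one_add_one_eq_two]; exact hx
  rw [contDiff_succ_iff_deriv] at hx11
  obtain ⟨hxdiff, -, hx1cd⟩ := hx11
  rw [contDiff_one_iff_deriv] at hx1cd
  obtain ⟨hx1diff, hcx2⟩ := hx1cd
  set x1 := deriv x with hx1def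
  set x2 := deriv (deriv x) with hx2def
  have hdx : ∀ t, HasDerivAt x (x1 t) t := fun t => (hxdiff t).hasDerivAt
  have hdx1 : ∀ t, HasDerivAt x1 (x2 t) t := fun t => (hx1diff t).hasDerivAt
  have hcx : Continuous x := hx.continuous
  have hcx1 : Continuous x1 := hx1diff.continuous
  have hx1per : Function.Periodic x1 (2*π) := per_deriv hxper
  -- F and G
  have hFfun : F = fun s => ∫ u in (0:ℝ)..s, f u := funext hF
  have hFd : ∀ s, HasDerivAt F (f s) s := by
    rw [hFfun]; exact fun s => (hf.integral_hasStrictDerivAt 0 s).hasDerivAt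
  have hcF : Continuous F := Differentiable.continuous fun s => (hFd s).differentiableAt
  set G := fun t => F (x t) with hG
  have hcG : Continuous G := hcF.comp hcx
  have hdG : ∀ t, HasDerivAt G (f (x t) * x1 t) t := fun t => (hFd (x t)).comp t (hdx t)
  have hGper : Function.Periodic G (2*π) := fun t => by simp only [hG, hxper t]
  -- phases
  set φ := fun t => Real.cos ((n:ℝ)*t - θ) with hφ
  set ψ := fun t => Real.sin ((n:ℝ)*t - θ) with hψ
  have hinner : ∀ t, HasDerivAt (fun t : ℝ => (n:ℝ)*t - θ) (n:ℝ) t := fun t => by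
    simpa using ((hasDerivAt_id t).const_mul (n:ℝ)).sub_const θ
  have hdφ : ∀ t, HasDerivAt φ (-ψ t * n) t := fun t => by
    have := (Real.hasDerivAt_cos ((n:ℝ)*t - θ)).comp t (hinner t); exact this
  have hdψ : ∀ t, HasDerivAt ψ (φ t * n) t := fun t => by
    have := (Real.hasDerivAt_sin ((n:ℝ)*t - θ)).comp t (hinner t); exact this
  have hcφ : Continuous φ :=
    Real.continuous_cos.comp ((continuous_const.mul continuous_id).sub continuous_const)
  have hcψ : Continuous ψ :=
    Real.continuous_sin.comp ((continuous_const.mul continuous_id).sub continuous_const)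
  have hφper : Function.Periodic φ (2*π) := by
    intro t
    have h1 : (n:ℝ)*(t+2*π) - θ = ((n:ℝ)*t - θ) + n*(2*π) := by ring
    simp only [hφ, h1, Real.cos_add_nat_mul_two_pi]
  have hψper : Function.Periodic ψ (2*π) := by
    intro t
    have h1 : (n:ℝ)*(t+2*π) - θ = ((n:ℝ)*t - θ) + n*(2*π) := by ring
    simp only [hψ, h1, Real.sin_add_nat_mul_two_pi]
  -- step A : An cos θ + Bn sin θ = ∫ e · φ
  have keyA : An * Real.cos θ + Bn * Real.sin θ = ∫ t in (0:ℝ)..(2*π), e t * φ t := by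
    have i1 : IntervalIntegrable (fun t => e t * Real.cos ((n:ℝ)*t) * Real.cos θ)
        volume 0 (2*π) := (Continuous.intervalIntegrable (by fun_prop) _ _)
    have i2 : IntervalIntegrable (fun t => e t * Real.sin ((n:ℝ)*t) * Real.sin θ)
        volume 0 (2*π) := (Continuous.intervalIntegrable (by fun_prop) _ _)
    rw [hA, hB, ← intervalIntegral.integral_mul_const, ← intervalIntegral.integral_mul_const,
      ← intervalIntegral.integral_add i1 i2]
    congr 1; funext t
    simp only [hφ, Real.cos_sub]
    ring
  -- IBP identities
  have hIBP1 : (∫ t in (0:ℝ)..(2*π), x2 t * φ t) = (n:ℝ) * ∫ t in (0:ℝ)..(2*π), x1 t * ψ t := by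
    have h0 := ibp_per x1 φ x2 (fun t => -ψ t * n) hdx1 hdφ hcx2
      ((hcψ.neg).mul continuous_const) hx1per hφper
    rw [h0]
    have h1 : (fun t => x1 t * (-ψ t * (n:ℝ))) = fun t => (-(n:ℝ)) * (x1 t * ψ t) := by
      funext t; ring
    rw [h1, intervalIntegral.integral_const_mul]; ring
  have hIBP2 : (∫ t in (0:ℝ)..(2*π), x1 t * ψ t) = -(n:ℝ) * ∫ t in (0:ℝ)..(2*π), x t * φ t := by
    have h0 := ibp_per x ψ x1 (fun t => φ t * n) hdx hdψ hcx1
      (hcφ.mul continuous_const) hxper hψper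
    rw [h0]
    have h1 : (fun t => x t * (φ t * (n:ℝ))) = fun t => (n:ℝ) * (x t * φ t) := by
      funext t; ring
    rw [h1, intervalIntegral.integral_const_mul]; ring
  have hIBP3 : (∫ t in (0:ℝ)..(2*π), (f (x t) * x1 t) * φ t)
      = (n:ℝ) * ∫ t in (0:ℝ)..(2*π), G t * ψ t := by
    have h0 := ibp_per G φ (fun t => f (x t) * x1 t) (fun t => -ψ t * n) hdG hdφ
      ((hf.comp hcx).mul hcx1) ((hcψ.neg).mul continuous_const) hGper hφper
    rw [h0]
    have h1 : (fun t => G t * (-ψ t * (n:ℝ))) = fun t => (-(n:ℝ)) * (G t * ψ t) := by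
      funext t; ring
    rw [h1, intervalIntegral.integral_const_mul]; ring
  -- split of ∫ e φ
  have hsplit : (∫ t in (0:ℝ)..(2*π), e t * φ t)
      = (∫ t in (0:ℝ)..(2*π), x2 t * φ t) + (∫ t in (0:ℝ)..(2*π), (f (x t) * x1 t) * φ t)
        + (∫ t in (0:ℝ)..(2*π), g (x t) * φ t)
        + (n:ℝ)^2 * ∫ t in (0:ℝ)..(2*π), x t * φ t := by
    have e1 : (fun t => e t * φ t)
        = fun t => x2 t * φ t + (f (x t) * x1 t) * φ t + g (x t) * φ t
            + (n:ℝ)^2 * (x t * φ t) := by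
      funext t; rw [← heq t]; ring
    have i1 : IntervalIntegrable (fun t => x2 t * φ t) volume 0 (2*π) :=
      Continuous.intervalIntegrable (by fun_prop) _ _
    have i2 : IntervalIntegrable (fun t => f (x t) * x1 t * φ t) volume 0 (2*π) :=
      Continuous.intervalIntegrable (by fun_prop) _ _
    have i3 : IntervalIntegrable (fun t => g (x t) * φ t) volume 0 (2*π) :=
      Continuous.intervalIntegrable (by fun_prop) _ _
    have i4 : IntervalIntegrable (fun t => (n:ℝ)^2 * (x t * φ t)) volume 0 (2*π) :=
      Continuous.intervalIntegrable (by fun_prop) _ _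
    rw [e1, intervalIntegral.integral_add ((i1.add i2).add i3) i4,
      intervalIntegral.integral_add (i1.add i2) i3,
      intervalIntegral.integral_add i1 i2,
      intervalIntegral.integral_const_mul]
  -- conclude identity
  have hiden : r = (n:ℝ) * (∫ t in (0:ℝ)..(2*π), G t * ψ t)
      + ∫ t in (0:ℝ)..(2*π), g (x t) * φ t := by
    rw [← hrkey, keyA, hsplit, hIBP1, hIBP2, hIBP3]; ring
  -- bounds
  have hFbound : (∫ t in (0:ℝ)..(2*π), G t * ψ t) ≤ 2*(MF - mF) := by
    have := bound_nonstrict n hn θ G hcG ((MF+mF)/2) (MF - mF)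
      (fun t => by
        have h1 := hFle (x t)
        rw [abs_le]; constructor <;> [linarith [h1.1]; linarith [h1.2]])
    exact this
  have hgbound : (∫ t in (0:ℝ)..(2*π), g (x t) * φ t) < 2*(Mg - mg) := by
    have hrw : (fun t => g (x t) * φ t)
        = fun t => g (x t) * Real.sin ((n:ℝ)*t - (θ - π/2)) := by
      funext t
      have h1 : (n:ℝ)*t - (θ - π/2) = ((n:ℝ)*t - θ) + π/2 := by ring
      rw [h1, Real.sin_add_pi_div_two]
    rw [hrw]
    exact bound_strict n hn (θ - π/2) (fun t => g (x t)) (hg.comp hcx) ((Mg+mg)/2) (Mg - mg)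
      hΔg (fun t => by
        have h1 := hgle (x t)
        rw [abs_le]; constructor <;> [linarith [h1.1]; linarith [h1.2]])
  have hmul : (n:ℝ) * (∫ t in (0:ℝ)..(2*π), G t * ψ t) ≤ (n:ℝ) * (2*(MF - mF)) :=
    mul_le_mul_of_nonneg_left hFbound hnn
  have : r < (n:ℝ) * (2*(MF - mF)) + 2*(Mg - mg) := by rw [hiden]; linarith
  calc r < (n:ℝ) * (2*(MF - mF)) + 2*(Mg - mg) := this
  _ = 2 * n * (MF - mF) + 2 * (Mg - mg) := by ring
end

section
/- Let G : ℝ² → ℝ² be continuous and V : ℝ² → ℝ be continuous. Suppose V(G(ξ)) > V(ξ) for every ξ ∈ ℝ². Then for any ξ₀ ∈ ℝ², the sequence defined by ξ_{k+1} = G(ξ_k) satisfies lim_{k→∞} ‖ξ_k‖ = ∞. -/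
open Filter

theorem stmt_8 (G : EuclideanSpace ℝ (Fin 2) → EuclideanSpace ℝ (Fin 2))
    (V : EuclideanSpace ℝ (Fin 2) → ℝ)
    (hG : Continuous G) (hV : Continuous V)
    (hinc : ∀ ξ, V ξ < V (G ξ))
    (ξ : ℕ → EuclideanSpace ℝ (Fin 2))
    (hseq : ∀ k, ξ (k + 1) = G (ξ k)) :
    Tendsto (fun k => ‖ξ k‖) atTop atTop := by
  by_contra h
  rw [tendsto_atTop_atTop] at h
  push_neg at h
  obtain ⟨C, hC⟩ := h
  have hfreq : ∃ᶠ k in atTop, ξ k ∈ Metric.closedBall (0 : EuclideanSpace ℝ (Fin 2)) C := by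
    rw [frequently_atTop]
    intro N
    obtain ⟨k, hk, hkC⟩ := hC N
    exact ⟨k, hk, by simpa [Metric.mem_closedBall, dist_eq_norm] using hkC.le⟩
  have hb : Bornology.IsBounded (Metric.closedBall (0 : EuclideanSpace ℝ (Fin 2)) C) :=
    Metric.isBounded_closedBall
  obtain ⟨p, _, φ, hφ, hconv⟩ := tendsto_subseq_of_frequently_bounded hb hfreq
  set v := fun k => V (ξ k) with hv
  have hmono : StrictMono v := strictMono_nat_of_lt_succ fun k => by
    simp only [hv, hseq k]; exact hinc (ξ k)
  have hsub : Tendsto (fun j => v (φ j)) atTop (nhds (V p)) := (hV.tendsto p).comp hconv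
  have hnot : ¬ Tendsto v atTop atTop := fun ht =>
    not_tendsto_atTop_of_tendsto_nhds hsub (ht.comp hφ.tendsto_atTop)
  obtain ⟨l, hl⟩ := (tendsto_of_monotone hmono.monotone).resolve_left hnot
  have hl1 : l = V p := tendsto_nhds_unique (hl.comp hφ.tendsto_atTop) hsub
  have hconv2 : Tendsto (fun j => ξ (φ j + 1)) atTop (nhds (G p)) := by
    simp only [hseq]
    exact (hG.tendsto p).comp hconv
  have hsub2 : Tendsto (fun j => v (φ j + 1)) atTop (nhds (V (G p))) :=
    (hV.tendsto _).comp hconv2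
  have hφ2 : StrictMono (fun j => φ j + 1) := fun a b hab => by simpa using hφ hab
  have hl2 : l = V (G p) := tendsto_nhds_unique (hl.comp hφ2.tendsto_atTop) hsub2
  have := hinc p
  linarith [hl1, hl2]
end
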